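/- Let (X,d) be a nonempty compact metric space, f : X → X a continuous, open, distance expanding map, and φ : X → ℝ continuous. Suppose a Borel probability measure m on X and λ > 0 satisfy ∫_X (L_φ g) dm = λ·∫_X g dm for every continuous g : X → ℝ, where (L_φ g)(x) = Σ_{y ∈ f^{−1}(x)} g(y)·e^{φ(y)}. Then for every Borel set Y ⊆ X on which f is injective, m(f(Y)) = λ·∫_Y e^{−φ} dm; that is, f has Jacobian λ·e^{−φ} with respect to m, so m is φ-conformal with parameter λ. -/

import Mathlib

open MeasureTheory Filter Metric Set

/-- `f` is distance expanding: there are `lam > 1` and `η > 0` with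
`dist (f x) (f y) ≥ lam * dist x y` whenever `dist x y ≤ η`. -/
def DistanceExpanding {X : Type*} [MetricSpace X] (f : X → X) : Prop :=
  ∃ lam > (1 : ℝ), ∃ η > (0 : ℝ), ∀ x y : X, dist x y ≤ η →
    lam * dist x y ≤ dist (f x) (f y)

/-- `f` is topologically transitive: for all nonempty open `U, V` there is
`n ≥ 0` with `f^[n] '' U ∩ V ≠ ∅`. -/
def TopologicallyTransitive {X : Type*} [TopologicalSpace X] (f : X → X) : Prop :=
  ∀ U V : Set X, IsOpen U → IsOpen V → U.Nonempty → V.Nonempty →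
    ∃ n : ℕ, (f^[n] '' U ∩ V).Nonempty

/-- `φ` is Hölder continuous: `|φ x - φ y| ≤ C * dist x y ^ b` for some
`C > 0` and `b ∈ (0, 1]`. -/
def HolderPotential {X : Type*} [MetricSpace X] (φ : X → ℝ) : Prop :=
  ∃ C > (0 : ℝ), ∃ b ∈ Set.Ioc (0 : ℝ) 1, ∀ x y : X, |φ x - φ y| ≤ C * dist x y ^ b

/-- Birkhoff sum `S_n φ (x) = ∑_{j<n} φ (f^j x)`. -/
def birkhoffSum' {X : Type*} (f : X → X) (φ : X → ℝ) (n : ℕ) (x : X) : ℝ :=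
  ∑ j ∈ Finset.range n, φ (f^[j] x)

/-- The Bowen ball `B_n(x, r) = {y : dist (f^j x) (f^j y) < r for all 0 ≤ j ≤ n}`. -/
def bowenBall {X : Type*} [MetricSpace X] (f : X → X) (n : ℕ) (x : X) (r : ℝ) : Set X :=
  {y | ∀ j ≤ n, dist (f^[j] x) (f^[j] y) < r}

/-- The `n`-th level tree sum `∑_{x ∈ f^{-n}(x₀)} exp (S_n φ (x))`
(a `tsum` over the fiber, which is finite in the situations considered). -/
noncomputable def treeSum {X : Type*} (f : X → X) (φ : X → ℝ) (n : ℕ) (x₀ : X) : ℝ :=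
  ∑' x : (f^[n] ⁻¹' {x₀} : Set X), Real.exp (birkhoffSum' f φ n x)

/-- The transfer (Perron–Frobenius–Ruelle) operator
`(L_φ g)(x) = ∑_{y ∈ f⁻¹(x)} g(y) e^{φ(y)}`
(a `tsum` over the fiber, which is finite in the situations considered). -/
noncomputable def transferOp {X : Type*} (f : X → X) (φ : X → ℝ) (g : X → ℝ) (x : X) : ℝ :=
  ∑' y : (f ⁻¹' {x} : Set X), g y * Real.exp (φ y)

section Aux
open scoped NNReal ENNReal


variable {X : Type*} [MetricSpace X] [CompactSpace X] [Nonempty X]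
  [MeasurableSpace X] [BorelSpace X]

lemma exists_bound_of_continuous (g : X → ℝ) (hg : Continuous g) :
    ∃ C : ℝ, ∀ x, ‖g x‖ ≤ C := by
  obtain ⟨x₀, -, h⟩ := isCompact_univ.exists_isMaxOn univ_nonempty
    ((continuous_norm.comp hg).continuousOn)
  exact ⟨‖g x₀‖, fun x => h (mem_univ x)⟩

lemma key_ball (f : X → X) (φ : X → ℝ) (hf : Continuous f) (hopen : IsOpenMap f)
    (hφ : Continuous φ) (m : Measure X) (hm : IsProbabilityMeasure m)
    (lam : ℝ) (hlam : 0 < lam)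
    (heig : ∀ g : X → ℝ, Continuous g →
      ∫ x, transferOp f φ g x ∂m = lam * ∫ x, g x ∂m)
    (lam' η : ℝ) (hlam' : 1 < lam') (hη : 0 < η)
    (hexp : ∀ x y : X, dist x y ≤ η → lam' * dist x y ≤ dist (f x) (f y))
    (c : X) (Y : Set X) (hY : MeasurableSet Y) (hYU : Y ⊆ ball c (η/2)) :
    (m (f '' Y)).toReal = lam * ∫ y in Y, Real.exp (-(φ y)) ∂m := by
  haveI := hm
  set U : Set X := ball c (η/2) with hU
  have hUd : ∀ x ∈ U, ∀ y ∈ U, dist x y ≤ η := by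
    intro x hx y hy
    have h1 : dist x c < η/2 := mem_ball.1 hx
    have h2 : dist y c < η/2 := mem_ball.1 hy
    have := dist_triangle x c y
    rw [dist_comm c y] at this
    linarith
  have hinj : Set.InjOn f U := by
    intro x hx y hy hxy
    by_contra hne
    have h1 : 0 < dist x y := dist_pos.2 hne
    have h2 := hexp x y (hUd x hx y hy)
    rw [hxy, dist_self] at h2
    nlinarith
  set invF : X → X := Function.invFunOn f U with hinvF
  have hmemU : ∀ x ∈ f '' U, invF x ∈ U := by
    rintro x ⟨a, ha, rfl⟩
    exact Function.invFunOn_mem ⟨a, ha, rfl⟩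
  have hfinv : ∀ x ∈ f '' U, f (invF x) = x := by
    rintro x ⟨a, ha, rfl⟩
    exact Function.invFunOn_eq ⟨a, ha, rfl⟩
  have hinvF_eq : ∀ y ∈ U, invF (f y) = y := fun y hy =>
    hinj (hmemU _ (mem_image_of_mem f hy)) hy (hfinv _ (mem_image_of_mem f hy))
  have hlam'0 : (0:ℝ) < lam' := lt_trans one_pos hlam'
  have hlip : LipschitzOnWith (Real.toNNReal lam'⁻¹) invF (f '' U) := by
    apply LipschitzOnWith.of_dist_le_mul
    intro x hx y hy
    have h1 := hexp (invF x) (invF y) (hUd _ (hmemU x hx) _ (hmemU y hy))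
    rw [hfinv x hx, hfinv y hy] at h1
    rw [Real.coe_toNNReal _ (inv_nonneg.2 hlam'0.le)]
    rw [inv_mul_eq_div, le_div_iff₀ hlam'0, mul_comm]
    exact h1
  have hcontOn : ContinuousOn invF (f '' U) := hlip.continuousOn
  have hfUopen : IsOpen (f '' U) := hopen _ isOpen_ball
  have hfUm : MeasurableSet (f '' U) := hfUopen.measurableSet
  have hUm : MeasurableSet U := isOpen_ball.measurableSet
  have haem : AEMeasurable invF (m.restrict (f '' U)) := hcontOn.aemeasurable hfUm
  -- density
  set ρ : X → ℝ := fun x => lam * Real.exp (-(φ x)) with hρ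
  have hρcont : Continuous ρ := continuous_const.mul (Real.continuous_exp.comp hφ.neg)
  have hρnonneg : ∀ x, 0 ≤ ρ x := fun x => mul_nonneg hlam.le (Real.exp_pos _).le
  set ρnn : X → ℝ≥0 := fun x => Real.toNNReal (ρ x) with hρnn
  have hρnn_coe : ∀ x, (ρnn x : ℝ) = ρ x := fun x => Real.coe_toNNReal _ (hρnonneg x)
  have hρnn_meas : Measurable ρnn := (continuous_real_toNNReal.comp hρcont).measurable
  -- cutoffs
  set χ : ℕ → X → ℝ := fun k x => max 0 (min 1 (k * (η/2 - dist x c))) with hχ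
  have hχcont : ∀ k, Continuous (χ k) := fun k =>
    continuous_const.max (continuous_const.min
      (continuous_const.mul (continuous_const.sub (continuous_id.dist continuous_const))))
  have hχ0 : ∀ k x, 0 ≤ χ k x := fun k x => le_max_left _ _
  have hχ1 : ∀ k x, χ k x ≤ 1 := fun k x =>
    max_le zero_le_one (min_le_left _ _)
  have hχzero : ∀ k, ∀ x ∉ U, χ k x = 0 := by
    intro k x hx
    have hd : ¬ dist x c < η/2 := fun h => hx (mem_ball.2 h)
    push_neg at hd
    have : (k:ℝ) * (η/2 - dist x c) ≤ 0 :=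
      mul_nonpos_of_nonneg_of_nonpos (Nat.cast_nonneg k) (by linarith)
    apply max_eq_left
    exact le_trans (min_le_right _ _) this
  have hχtend : ∀ x ∈ U, Filter.Tendsto (fun k => χ k x) atTop (nhds 1) := by
    intro x hx
    have hd : 0 < η/2 - dist x c := by
      have := mem_ball.1 hx; linarith
    have hev : ∀ᶠ k : ℕ in atTop, χ k x = 1 := by
      have h2 : ∀ᶠ k : ℕ in atTop, (1:ℝ) / (η/2 - dist x c) ≤ (k:ℝ) :=
        tendsto_natCast_atTop_atTop.eventually_ge_atTop _
      filter_upwards [h2] with k hk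
      have h3 : (1:ℝ) ≤ (k:ℝ) * (η/2 - dist x c) := by
        rw [div_le_iff₀ hd] at hk
        linarith
      simp only [hχ]
      rw [min_eq_left h3, max_eq_right zero_le_one]
    exact Filter.Tendsto.congr' (hev.mono fun k hk => hk.symm) tendsto_const_nhds
  -- measures
  set μ₁ : Measure X := (m.restrict (f '' U)).map invF with hμ₁
  set μ₂ : Measure X := (m.restrict U).withDensity (fun x => (ρnn x : ℝ≥0∞)) with hμ₂
  -- the key integral identity for continuous g
  have claim : ∀ g : X → ℝ, Continuous g →
      ∫ x in f '' U, g (invF x) ∂m = lam * ∫ x in U, g x * Real.exp (-(φ x)) ∂m := by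
    intro g hg
    set h : ℕ → X → ℝ := fun k x => χ k x * (g x * Real.exp (-(φ x))) with hh
    have hhc : ∀ k, Continuous (h k) := fun k =>
      (hχcont k).mul (hg.mul (Real.continuous_exp.comp hφ.neg))
    have hterm : ∀ k y, h k y * Real.exp (φ y) = χ k y * g y := by
      intro k y
      have hne := Real.exp_ne_zero (φ y)
      simp only [hh, Real.exp_neg]
      field_simp
    have htrans : ∀ k x, transferOp f φ (h k) x
        = (f '' U).indicator (fun x => χ k (invF x) * g (invF x)) x := by
      intro k x
      by_cases hx : x ∈ f '' U
      · rw [indicator_of_mem hx]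
        have hb₀ : f (invF x) = x := hfinv x hx
        have hts : transferOp f φ (h k) x = h k (invF x) * Real.exp (φ (invF x)) := by
          apply tsum_eq_single (⟨invF x, by simpa using hb₀⟩ : (f ⁻¹' {x} : Set X))
          rintro ⟨y, hy⟩ hne
          have hyx : f y = x := by simpa using hy
          by_cases hyU : y ∈ U
          · exfalso
            apply hne
            ext
            exact hinj hyU (hmemU x hx) (hyx.trans hb₀.symm)
          · have hz : χ k y = 0 := hχzero k y hyU
            have : h k y = 0 := by simp [hh, hz]
            simp [this]
        rw [hts, hterm]
      · rw [indicator_of_notMem hx]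
        have hzero : ∀ b : (f ⁻¹' {x} : Set X), h k (b : X) * Real.exp (φ (b : X)) = 0 := by
          rintro ⟨y, hy⟩
          have hyx : f y = x := by simpa using hy
          have hyU : y ∉ U := fun hyU => hx ⟨y, hyU, hyx⟩
          have hz : χ k y = 0 := hχzero k y hyU
          simp [hh, hz]
        unfold transferOp
        rw [tsum_congr hzero, tsum_zero]
    have hint : ∀ k, ∫ x, transferOp f φ (h k) x ∂m
        = ∫ x in f '' U, χ k (invF x) * g (invF x) ∂m := by
      intro k
      rw [show (fun x => transferOp f φ (h k) x)
          = fun x => (f '' U).indicator (fun x => χ k (invF x) * g (invF x)) x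
          from funext (htrans k)]
      exact integral_indicator hfUm
    obtain ⟨Cg, hCg⟩ := exists_bound_of_continuous g hg
    have hCg0 : 0 ≤ Cg := le_trans (norm_nonneg _) (hCg (Classical.arbitrary X))
    have hL : Filter.Tendsto (fun k => ∫ x in f '' U, χ k (invF x) * g (invF x) ∂m)
        atTop (nhds (∫ x in f '' U, g (invF x) ∂m)) := by
      apply tendsto_integral_of_dominated_convergence (bound := fun _ => Cg)
      · intro k
        exact (((hχcont k).comp_continuousOn hcontOn).mul
          (hg.comp_continuousOn hcontOn)).aestronglyMeasurable hfUm
      · exact integrable_const _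
      · intro k
        refine Filter.Eventually.of_forall fun x => ?_
        have h1 : ‖χ k (invF x) * g (invF x)‖ = ‖χ k (invF x)‖ * ‖g (invF x)‖ := norm_mul _ _
        have h2 : ‖χ k (invF x)‖ ≤ 1 := by
          rw [Real.norm_eq_abs, abs_of_nonneg (hχ0 k _)]
          exact hχ1 k _
        calc ‖χ k (invF x) * g (invF x)‖ = ‖χ k (invF x)‖ * ‖g (invF x)‖ := h1
          _ ≤ 1 * Cg := mul_le_mul h2 (hCg _) (norm_nonneg _) zero_le_one
          _ = Cg := one_mul _
      · filter_upwards [ae_restrict_mem hfUm] with x hx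
        have h1 := (hχtend _ (hmemU x hx)).mul (tendsto_const_nhds (x := g (invF x)))
        simpa using h1
    obtain ⟨Ce, hCe⟩ := exists_bound_of_continuous (fun x => g x * Real.exp (-(φ x)))
      (hg.mul (Real.continuous_exp.comp hφ.neg))
    have hR : Filter.Tendsto (fun k => ∫ x, h k x ∂m)
        atTop (nhds (∫ x in U, g x * Real.exp (-(φ x)) ∂m)) := by
      rw [← integral_indicator hUm]
      apply tendsto_integral_of_dominated_convergence (bound := fun _ => Ce)
      · intro k; exact (hhc k).aestronglyMeasurable
      · exact integrable_const _
      · intro k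
        refine Filter.Eventually.of_forall fun x => ?_
        have h2 : ‖χ k x‖ ≤ 1 := by
          rw [Real.norm_eq_abs, abs_of_nonneg (hχ0 k _)]
          exact hχ1 k _
        calc ‖h k x‖ = ‖χ k x‖ * ‖g x * Real.exp (-(φ x))‖ := norm_mul _ _
          _ ≤ 1 * Ce := mul_le_mul h2 (hCe _) (norm_nonneg _) zero_le_one
          _ = Ce := one_mul _
      · refine Filter.Eventually.of_forall fun x => ?_
        by_cases hxU : x ∈ U
        · rw [indicator_of_mem hxU]
          simpa using (hχtend x hxU).mul
            (tendsto_const_nhds (x := g x * Real.exp (-(φ x))))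
        · rw [indicator_of_notMem hxU]
          rw [show (fun k => h k x) = fun _ => (0:ℝ) from funext fun k => by
            simp [hh, hχzero k x hxU]]
          exact tendsto_const_nhds
    have h1 : Filter.Tendsto (fun k => ∫ x, transferOp f φ (h k) x ∂m)
        atTop (nhds (∫ x in f '' U, g (invF x) ∂m)) := by
      rw [show (fun k => ∫ x, transferOp f φ (h k) x ∂m)
          = fun k => ∫ x in f '' U, χ k (invF x) * g (invF x) ∂m from funext hint]
      exact hL
    have h2 : Filter.Tendsto (fun k => ∫ x, transferOp f φ (h k) x ∂m)
        atTop (nhds (lam * ∫ x in U, g x * Real.exp (-(φ x)) ∂m)) := by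
      rw [show (fun k => ∫ x, transferOp f φ (h k) x ∂m)
          = fun k => lam * ∫ x, h k x ∂m from funext fun k => heig (h k) (hhc k)]
      exact hR.const_mul lam
    exact tendsto_nhds_unique h1 h2
  -- equality of measures
  haveI hfin2 : IsFiniteMeasure μ₂ := by
    obtain ⟨Cρ, hCρ⟩ := exists_bound_of_continuous ρ hρcont
    constructor
    rw [hμ₂, withDensity_apply _ MeasurableSet.univ, setLIntegral_univ]
    calc ∫⁻ x, (ρnn x : ℝ≥0∞) ∂(m.restrict U)
        ≤ ∫⁻ _, ENNReal.ofReal Cρ ∂(m.restrict U) := by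
          apply lintegral_mono
          intro x
          show (ρnn x : ℝ≥0∞) ≤ ENNReal.ofReal Cρ
          rw [← ENNReal.ofReal_coe_nnreal, hρnn_coe]
          exact ENNReal.ofReal_le_ofReal (le_trans (le_abs_self _) (hCρ x))
      _ = ENNReal.ofReal Cρ * (m.restrict U) univ := lintegral_const _
      _ < ⊤ := ENNReal.mul_lt_top ENNReal.ofReal_lt_top (measure_lt_top _ _)
  have hμeq : μ₁ = μ₂ := by
    apply ext_of_forall_lintegral_eq_of_IsFiniteMeasure
    intro G
    have hGc : Continuous fun x => (G x : ℝ) := NNReal.continuous_coe.comp G.continuous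
    have hGnn : ∀ x, 0 ≤ (G x : ℝ) := fun x => (G x).2
    have hcs : HasCompactSupport fun x => (G x : ℝ) := (isClosed_tsupport _).isCompact
    have key : ∀ (μ : Measure X), IsFiniteMeasure μ →
        ∫⁻ x, (G x : ℝ≥0∞) ∂μ = ENNReal.ofReal (∫ x, (G x : ℝ) ∂μ) := by
      intro μ hμ
      rw [ofReal_integral_eq_lintegral_ofReal (hGc.integrable_of_hasCompactSupport hcs)
        (Filter.Eventually.of_forall hGnn)]
      apply lintegral_congr
      intro x
      rw [ENNReal.ofReal_coe_nnreal]
    rw [key μ₁ inferInstance, key μ₂ hfin2]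
    congr 1
    -- ∫ coeG dμ₁ = ∫ coeG dμ₂
    rw [hμ₁, integral_map haem hGc.aestronglyMeasurable]
    rw [hμ₂, integral_withDensity_eq_integral_smul hρnn_meas]
    rw [claim _ hGc]
    rw [← integral_const_mul]
    apply setIntegral_congr_fun hUm
    intro x _
    simp only [NNReal.smul_def, hρnn_coe, hρ, smul_eq_mul]
    ring
  -- evaluate at Y
  have h1 : μ₁ Y = m (f '' Y) := by
    rw [hμ₁, Measure.map_apply_of_aemeasurable haem hY, Measure.restrict_apply' hfUm]
    congr 1
    ext x
    constructor
    · rintro ⟨hxY, hxfU⟩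
      exact ⟨invF x, hxY, hfinv x hxfU⟩
    · rintro ⟨y, hyY, rfl⟩
      have hyU : y ∈ U := hYU hyY
      constructor
      · rw [mem_preimage, hinvF_eq y hyU]; exact hyY
      · exact mem_image_of_mem f hyU
  have h2 : μ₂ Y = ENNReal.ofReal (lam * ∫ y in Y, Real.exp (-(φ y)) ∂m) := by
    rw [hμ₂, withDensity_apply _ hY]
    have hres : (m.restrict U).restrict Y = m.restrict Y := by
      rw [Measure.restrict_restrict hY, inter_eq_self_of_subset_left hYU]
    rw [hres]
    have hρint : Integrable ρ (m.restrict Y) :=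
      (hρcont.integrable_of_hasCompactSupport ((isClosed_tsupport _).isCompact)).restrict
    rw [show lam * ∫ y in Y, Real.exp (-(φ y)) ∂m = ∫ y in Y, ρ y ∂m by
      rw [← integral_const_mul]]
    rw [ofReal_integral_eq_lintegral_ofReal hρint (Filter.Eventually.of_forall hρnonneg)]
    apply lintegral_congr
    intro x
    rw [← ENNReal.ofReal_coe_nnreal, hρnn_coe]
  rw [← h1, hμeq, h2, ENNReal.toReal_ofReal]
  exact mul_nonneg hlam.le (integral_nonneg fun y => (Real.exp_pos _).le)

end Aux

/-- **The eigen-measure is conformal.** If `m` is a probability measure with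
`∫ L_φ g dm = lam * ∫ g dm` for every continuous `g`, then for every Borel set `Y`
on which `f` is injective, `m (f '' Y) = lam * ∫_Y e^{-φ} dm`; i.e. `f` has Jacobian
`lam * e^{-φ}` with respect to `m`, so `m` is `φ`-conformal with parameter `lam`. -/
theorem eigenmeasure_is_conformal {X : Type*} [MetricSpace X] [CompactSpace X]
    [Nonempty X] [MeasurableSpace X] [BorelSpace X]
    (f : X → X) (φ : X → ℝ) (hf : Continuous f) (hopen : IsOpenMap f)
    (hexp : DistanceExpanding f) (hφ : Continuous φ)
    (m : Measure X) (hm : IsProbabilityMeasure m) (lam : ℝ) (hlam : 0 < lam)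
    (heig : ∀ g : X → ℝ, Continuous g →
      ∫ x, transferOp f φ g x ∂m = lam * ∫ x, g x ∂m) :
    ∀ Y : Set X, MeasurableSet Y → Set.InjOn f Y →
      (m (f '' Y)).toReal = lam * ∫ y in Y, Real.exp (-(φ y)) ∂m := by
  obtain ⟨lam', hlam', η, hη, hexpand⟩ := hexp
  intro Y hYm hYinj
  haveI := hm
  -- finite cover by balls of radius η/2
  obtain ⟨t, ht⟩ := isCompact_univ.elim_finite_subcover (fun c : X => ball c (η/2))
    (fun _ => isOpen_ball) (fun x _ => mem_iUnion.2 ⟨x, mem_ball_self (by positivity)⟩)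
  set e : ℕ → X := fun i => t.toList.getD i (Classical.arbitrary X) with he
  set V : ℕ → Set X := fun i => ball (e i) (η/2) with hV
  have hVcover : (⋃ i, V i) = univ := by
    apply eq_univ_of_univ_subset
    intro x hx
    obtain ⟨c, hct, hxc⟩ := mem_iUnion₂.1 (ht (mem_univ x))
    obtain ⟨n, hn⟩ := List.mem_iff_get.1 (Finset.mem_toList.2 hct)
    refine mem_iUnion.2 ⟨n.1, ?_⟩
    have : e n.1 = c := by
      rw [he]
      simp only
      rw [List.getD_eq_get (i := n)]
      exact hn
    rw [hV]; simp only
    rw [this]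
    exact hxc
  set W : ℕ → Set X := disjointed V with hW
  have hWm : ∀ i, MeasurableSet (W i) :=
    MeasurableSet.disjointed fun i => measurableSet_ball
  have hWd : Pairwise (Function.onFun Disjoint W) := disjoint_disjointed V
  have hWsub : ∀ i, W i ⊆ V i := disjointed_subset V
  have hWU : (⋃ i, W i) = univ := by rw [hW, iUnion_disjointed, hVcover]
  set Z : ℕ → Set X := fun i => Y ∩ W i with hZ
  have hZm : ∀ i, MeasurableSet (Z i) := fun i => hYm.inter (hWm i)
  have hZd : Pairwise (Function.onFun Disjoint Z) := fun i j hij =>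
    ((hWd hij).mono inter_subset_right inter_subset_right)
  have hZunion : (⋃ i, Z i) = Y := by
    rw [hZ, ← inter_iUnion, hWU, inter_univ]
  have hZsub : ∀ i, Z i ⊆ Y := fun i => inter_subset_left
  have hZim : ∀ i, MeasurableSet (f '' Z i) := fun i =>
    (hZm i).image_of_continuousOn_injOn hf.continuousOn (hYinj.mono (hZsub i))
  have hfd : Pairwise (Function.onFun Disjoint fun i => f '' Z i) := by
    intro i j hij
    rw [Function.onFun, disjoint_left]
    rintro z ⟨a, haZ, rfl⟩ ⟨b, hbZ, hab⟩
    have hab' : a = b := hYinj (hZsub i haZ) (hZsub j hbZ) hab.symm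
    subst hab'
    exact (hZd hij).le_bot ⟨haZ, hbZ⟩
  have himU : f '' Y = ⋃ i, f '' Z i := by rw [← image_iUnion, hZunion]
  have hmeasUnion : m (f '' Y) = ∑' i, m (f '' Z i) := by
    rw [himU, measure_iUnion hfd hZim]
  have hkey : ∀ i, (m (f '' Z i)).toReal = lam * ∫ y in Z i, Real.exp (-(φ y)) ∂m := by
    intro i
    exact key_ball f φ hf hopen hφ m hm lam hlam heig lam' η hlam' hη hexpand
      (e i) (Z i) (hZm i) (fun x hx => hWsub i hx.2)
  have hintegrable : IntegrableOn (fun y => Real.exp (-(φ y))) (⋃ i, Z i) m :=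
    (((Real.continuous_exp.comp hφ.neg).integrable_of_hasCompactSupport
      ((isClosed_tsupport _).isCompact))).integrableOn
  calc (m (f '' Y)).toReal = (∑' i, m (f '' Z i)).toReal := by rw [hmeasUnion]
    _ = ∑' i, (m (f '' Z i)).toReal :=
        ENNReal.tsum_toReal_eq fun i => measure_ne_top m _
    _ = ∑' i, lam * ∫ y in Z i, Real.exp (-(φ y)) ∂m := tsum_congr hkey
    _ = lam * ∑' i, ∫ y in Z i, Real.exp (-(φ y)) ∂m := tsum_mul_left
    _ = lam * ∫ y in ⋃ i, Z i, Real.exp (-(φ y)) ∂m := by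
        rw [integral_iUnion hZm hZd hintegrable]
    _ = lam * ∫ y in Y, Real.exp (-(φ y)) ∂m := by rw [hZunion]
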